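/- Let S* be a nonzero symmetric positive semidefinite n×n real matrix, let η₁ > 0 be its largest eigenvalue, and let u be a unit eigenvector of S* for η₁. Then the matrix K = −η₁·u·uᵀ belongs to the tangent cone at S* of the set of symmetric positive semidefinite n×n matrices (viewed as a subset of the normed space of n×n real matrices), and tr(K) = −η₁ < 0. -/

import Mathlib

open Matrix Filter

attribute [local instance] Matrix.normedAddCommGroup Matrix.normedSpace

private lemma key_ineq {n : ℕ} (S : Matrix (Fin n) (Fin n) ℝ)
    (hS : S.PosSemidef) (η : ℝ) (u : Fin n → ℝ) (hu : u ⬝ᵥ u = 1)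
    (heig : S *ᵥ u = η • u) (v : Fin n → ℝ) :
    η * (u ⬝ᵥ v) ^ 2 ≤ v ⬝ᵥ (S *ᵥ v) := by
  set a : ℝ := u ⬝ᵥ v with ha
  set w : Fin n → ℝ := v - a • u with hw
  have hv : v = a • u + w := by simp [hw]
  have huw : u ⬝ᵥ w = 0 := by
    simp [hw, dotProduct_sub, dotProduct_smul, hu, smul_eq_mul, dotProduct_comm u v, ha]
  have hSu_w : (S *ᵥ u) ⬝ᵥ w = 0 := by rw [heig]; simp [smul_dotProduct, huw]
  have hsym : Sᵀ = S := by
    have := hS.isHermitian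
    simpa [Matrix.IsHermitian, conjTranspose_eq_transpose_of_trivial] using this
  have huSw : u ⬝ᵥ (S *ᵥ w) = 0 := by
    rw [dotProduct_mulVec]
    have h2 : u ᵥ* S = S *ᵥ u := by rw [← hsym, vecMul_transpose, hsym]
    rw [h2, hSu_w]
  have hwSu : w ⬝ᵥ (S *ᵥ u) = 0 := by rw [heig]; simp [dotProduct_smul, dotProduct_comm w u, huw]
  have hwSw : 0 ≤ w ⬝ᵥ (S *ᵥ w) := by simpa using hS.dotProduct_mulVec_nonneg w
  have huSu : u ⬝ᵥ (S *ᵥ u) = η := by rw [heig]; simp [dotProduct_smul, hu]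
  have : v ⬝ᵥ (S *ᵥ v) = η * a ^ 2 + w ⬝ᵥ (S *ᵥ w) := by
    rw [hv]
    simp only [mulVec_add, mulVec_smul, dotProduct_add, add_dotProduct, dotProduct_smul,
      smul_dotProduct, smul_eq_mul, huSu, huSw, hwSu, hwSw]
    ring
  rw [this]
  nlinarith
/-- Constraint qualification step (Appendix A): if `η₁ > 0` is the largest eigenvalue of a
nonzero positive semidefinite matrix `S*` with unit eigenvector `u`, then
`K = -η₁ u uᵀ` lies in the tangent cone of the PSD cone at `S*` and has trace `-η₁ < 0`. -/
theorem stmt12 {n : ℕ} (S : Matrix (Fin n) (Fin n) ℝ)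
    (hS : S.PosSemidef) (hS0 : S ≠ 0)
    (η : ℝ) (hη : 0 < η) (u : Fin n → ℝ) (hu : u ⬝ᵥ u = 1)
    (heig : S *ᵥ u = η • u)
    (hmaxeig : ∀ (μ : ℝ) (v : Fin n → ℝ), v ≠ 0 → S *ᵥ v = μ • v → μ ≤ η) :
    (-η) • vecMulVec u u ∈
        tangentConeAt ℝ {M : Matrix (Fin n) (Fin n) ℝ | M.PosSemidef} S ∧
      ((-η) • vecMulVec u u).trace = -η ∧ (-η : ℝ) < 0 := by
  refine ⟨?_, ?_, by linarith⟩
  · set K : Matrix (Fin n) (Fin n) ℝ := (-η) • vecMulVec u u with hK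
    refine (fun hds hd hcd => mem_tangentConeAt_of_seq atTop (fun k : ℕ => (k + 1 : ℝ))
      (fun k : ℕ => ((k + 1 : ℝ))⁻¹ • K) hd hds hcd) ?_ ?_ ?_
    · filter_upwards [] with k
      have hk1 : (1 : ℝ) ≤ (k + 1 : ℝ) := by
        have : (0:ℝ) ≤ (k:ℝ) := Nat.cast_nonneg k
        linarith
      have hkpos : (0 : ℝ) < (k + 1 : ℝ) := by positivity
      set t : ℝ := ((k + 1 : ℝ))⁻¹ with ht
      have htpos : 0 < t := by positivity
      have ht1 : t ≤ 1 := by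
        rw [ht, inv_le_one_iff₀]; right; exact hk1
      show (S + t • K).PosSemidef
      have hsymS : ∀ i j, S j i = S i j := fun i j => by
        simpa using hS.isHermitian.apply i j
      refine Matrix.PosSemidef.of_dotProduct_mulVec_nonneg ?_ ?_
      · ext i j
        simp only [conjTranspose_apply, Matrix.add_apply, Matrix.smul_apply, hK,
          vecMulVec_apply, star_trivial, smul_eq_mul]
        rw [hsymS]; ring
      · intro v
        have hkey := key_ineq S hS η u hu heig v
        have h1 : vecMulVec u u *ᵥ v = (u ⬝ᵥ v) • u := by
          ext i
          simp [vecMulVec_apply, mulVec, dotProduct, Finset.mul_sum, mul_comm, mul_left_comm]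
        have hKv : v ⬝ᵥ ((t • K) *ᵥ v) = -(t * η) * (u ⬝ᵥ v) ^ 2 := by
          rw [hK, smul_smul, smul_mulVec, h1, dotProduct_smul, dotProduct_smul,
            smul_eq_mul, smul_eq_mul, dotProduct_comm v u]
          ring
        simp only [star_trivial, add_mulVec, dotProduct_add, hKv]
        have hsq : (0:ℝ) ≤ (u ⬝ᵥ v) ^ 2 := sq_nonneg _
        have hmono : (0:ℝ) ≤ (1 - t) * η * (u ⬝ᵥ v) ^ 2 :=
          mul_nonneg (mul_nonneg (by linarith) hη.le) hsq
        nlinarith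
    · have : Tendsto (fun k : ℕ => (k + 1 : ℝ)) atTop atTop := by
        exact tendsto_natCast_atTop_atTop.atTop_add tendsto_const_nhds
      have h2 := (tendsto_inv_atTop_zero.comp this).smul_const K
      simpa using h2
    · have : ∀ k : ℕ, (k + 1 : ℝ) • (((k + 1 : ℝ))⁻¹ • K) = K := by
        intro k
        rw [smul_smul, mul_inv_cancel₀ (by positivity), one_smul]
      simp only [this]
      exact tendsto_const_nhds
  · have : (vecMulVec u u).trace = 1 := by
      simpa [Matrix.trace, Matrix.diag, vecMulVec_apply, dotProduct] using hu
    rw [trace_smul, this]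
    simp
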